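/- Let X ⊆ ℝ² be a set of locations with V_X = {j − i : i, j ∈ X}, let ℓ : [0,∞) → [0,∞), and let R : [0,∞) → [0,∞) be measurable with the circular noise function f_R(v) = R(‖v‖) a probability density with respect to the Lebesgue measure on ℝ². Define D_X = {(‖v‖, ‖v′‖) : v, v′ ∈ ℝ², v′ − v ∈ V_X} and ℓ_X(r, r′) = inf { ℓ(‖v − v′‖) : ‖v‖ = r, ‖v′‖ = r′, v − v′ ∈ V_X }. Then the measure with density f_R satisfies ℓ-privacy on X (i.e., P(V) ≤ e^{ℓ(‖u‖)}·P(τ_u(V)) for all measurable V ⊆ ℝ² and all u ∈ V_X) if and only if there exists a set N′ ⊂ [0,∞) of one-dimensional Lebesgue measure zero such that for all r, r′ ∈ [0,∞) \ N′ with (r, r′) ∈ D_X, R(r) ≤ e^{ℓ_X(r, r′)} · R(r′). -/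

import Mathlib

open MeasureTheory Real Set Filter Metric
open scoped ENNReal

noncomputable def e2map : (ℝ × ℝ) ≃ᵐ EuclideanSpace ℝ (Fin 2) :=
  (MeasurableEquiv.finTwoArrow).symm.trans (MeasurableEquiv.toLp 2 (Fin 2 → ℝ))

lemma e2map_mp : MeasurePreserving e2map volume volume :=
  ((EuclideanSpace.volume_preserving_symm_measurableEquiv_toLp (Fin 2)).symm).comp
    ((volume_preserving_finTwoArrow ℝ).symm _)

lemma e2map_norm (p : ℝ × ℝ) : ‖e2map p‖ = Real.sqrt (p.1^2 + p.2^2) := by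
  rw [EuclideanSpace.norm_eq]
  congr 1
  rw [Fin.sum_univ_two]
  simp [show ∀ i, e2map p i = ![p.1, p.2] i from fun _ => rfl, sq_abs]

lemma e2map_sub (p q : ℝ × ℝ) : e2map p - e2map q = e2map (p - q) := by
  ext i
  fin_cases i <;> rfl

lemma radial_null_prod {N : Set ℝ} (hN : MeasurableSet N) (h0 : volume N = 0) :
    volume {p : ℝ × ℝ | Real.sqrt (p.1^2 + p.2^2) ∈ N} = 0 := by
  set S := {p : ℝ × ℝ | Real.sqrt (p.1^2 + p.2^2) ∈ N}
  have hsrc : volume (polarCoord.sourceᶜ) = 0 := by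
    have := polarCoord_source_ae_eq_univ
    rwa [ae_eq_univ] at this
  set A : Set (ℝ × ℝ) := polarCoord.target ∩ {q | q.1 ∈ N} with hA
  have hAmeas : MeasurableSet A :=
    polarCoord.open_target.measurableSet.inter (measurable_fst hN)
  have hAnull : volume A = 0 := by
    have hsub : A ⊆ (N ∩ Ioi 0) ×ˢ (univ : Set ℝ) := by
      rintro ⟨x, y⟩ ⟨hx, hy⟩
      rw [polarCoord_target] at hx
      exact ⟨⟨hy, hx.1⟩, trivial⟩
    refine le_antisymm (le_trans (measure_mono hsub) ?_) zero_le
    rw [Measure.volume_eq_prod, Measure.prod_prod]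
    simp [measure_mono_null (inter_subset_left) h0]
  -- image bound
  have himg : S ∩ polarCoord.source ⊆ polarCoord.symm '' A := by
    intro p hp
    refine ⟨polarCoord p, ⟨polarCoord.map_source hp.2, ?_⟩, polarCoord.left_inv hp.2⟩
    exact hp.1
  have hB : ∀ q ∈ A, HasFDerivWithinAt polarCoord.symm
      (LinearMap.toContinuousLinearMap (Matrix.toLin (Module.Basis.finTwoProd ℝ) (Module.Basis.finTwoProd ℝ)
        !![Real.cos q.2, -q.1 * Real.sin q.2; Real.sin q.2, q.1 * Real.cos q.2])) A q :=
    fun q _ => (hasFDerivAt_polarCoord_symm q).hasFDerivWithinAt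
  have himg0 : volume (polarCoord.symm '' A) = 0 := by
    refine le_antisymm (le_trans (addHaar_image_le_lintegral_abs_det_fderiv volume hAmeas hB) ?_)
      zero_le
    rw [setLIntegral_measure_zero _ _ hAnull]
  refine le_antisymm ?_ zero_le
  calc volume S ≤ volume (S ∩ polarCoord.source) + volume (polarCoord.sourceᶜ) := by
        refine le_trans (measure_mono ?_) (measure_union_le _ _)
        intro p hp
        by_cases h : p ∈ polarCoord.source
        · exact Or.inl ⟨hp, h⟩
        · exact Or.inr h
    _ ≤ 0 := by rw [hsrc, measure_mono_null himg himg0, add_zero]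

lemma radial_null {N : Set ℝ} (hN : MeasurableSet N) (h0 : volume N = 0) :
    volume {v : EuclideanSpace ℝ (Fin 2) | ‖v‖ ∈ N} = 0 := by
  have hmeas : MeasurableSet {v : EuclideanSpace ℝ (Fin 2) | ‖v‖ ∈ N} :=
    measurable_norm hN
  rw [← e2map_mp.measure_preimage hmeas.nullMeasurableSet]
  have : e2map ⁻¹' {v : EuclideanSpace ℝ (Fin 2) | ‖v‖ ∈ N}
      = {p : ℝ × ℝ | Real.sqrt (p.1^2 + p.2^2) ∈ N} := by
    ext p; simp [Set.mem_preimage, e2map_norm]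
  rw [this]
  exact radial_null_prod hN h0


variable {f : EuclideanSpace ℝ (Fin 2) → ℝ≥0∞}

lemma wd_translate_apply (hf : Measurable f) (u : EuclideanSpace ℝ (Fin 2))
    {V : Set (EuclideanSpace ℝ (Fin 2))} (hV : MeasurableSet V) :
    (volume.withDensity f) ((fun v => v + u) '' V) = ∫⁻ v in V, f (v + u) ∂volume := by
  have himgm : MeasurableSet ((fun v => v + u) '' V) := by
    have himg : (fun v => v + u) '' V = (fun v => v + (-u)) ⁻¹' V := by
      ext w
      constructor
      · rintro ⟨v, hv, rfl⟩; simpa [add_assoc] using hv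
      · intro hw; exact ⟨w + (-u), hw, by simp⟩
    rw [himg]; exact (measurable_add_const (-u)) hV
  rw [withDensity_apply _ himgm]
  have emb := (MeasurableEquiv.addRight u).measurableEmbedding
  have mp : MeasurePreserving (fun v : EuclideanSpace ℝ (Fin 2) => v + u) volume volume :=
    measurePreserving_add_right volume u
  exact (mp.setLIntegral_comp_emb emb f V).symm

lemma privacy_iff_ae (hf : Measurable f) (u : EuclideanSpace ℝ (Fin 2)) (c : ℝ≥0∞) :
    (∀ V : Set (EuclideanSpace ℝ (Fin 2)), MeasurableSet V →
      (volume.withDensity f) V ≤ c * (volume.withDensity f) ((fun v => v + u) '' V)) ↔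
    (∀ᵐ v : EuclideanSpace ℝ (Fin 2) ∂volume, f v ≤ c * f (v + u)) := by
  have hm : Measurable fun v : EuclideanSpace ℝ (Fin 2) => f (v + u) :=
    hf.comp (measurable_add_const u)
  constructor
  · intro h
    refine ae_le_of_forall_setLIntegral_le_of_sigmaFinite hf (fun s hs _ => ?_)
    have h1 := h s hs
    rw [withDensity_apply _ hs, wd_translate_apply hf u hs] at h1
    calc ∫⁻ x in s, f x ∂volume ≤ c * ∫⁻ v in s, f (v + u) ∂volume := h1
      _ = ∫⁻ x in s, c * f (x + u) ∂volume := (lintegral_const_mul c hm).symm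
  · intro h V hV
    rw [withDensity_apply _ hV, wd_translate_apply hf u hV, ← lintegral_const_mul c hm]
    exact setLIntegral_mono_ae (hm.const_mul c).aemeasurable
      (h.mono fun v hv => fun _ => hv)


def badDens (S : Set ℝ) : Set ℝ :=
  {x ∈ S | ¬ Tendsto (fun h : ℝ => volume (S ∩ closedBall x h) / volume (closedBall x h))
      (nhdsWithin 0 (Ioi 0)) (nhds 1)}

lemma badDens_null {S : Set ℝ} (hS : MeasurableSet S) : volume (badDens S) = 0 := by
  have h := Besicovitch.ae_tendsto_measure_inter_div (volume : Measure ℝ) S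
  rw [ae_iff] at h
  rw [Measure.restrict_apply' hS] at h
  refine measure_mono_null ?_ h
  rintro x ⟨hx1, hx2⟩
  exact ⟨hx2, hx1⟩

lemma dens_lower {S : Set ℝ} {x : ℝ} (hS : MeasurableSet S)
    (hd : Tendsto (fun h : ℝ => volume (S ∩ closedBall x h) / volume (closedBall x h))
      (nhdsWithin 0 (Ioi 0)) (nhds 1)) :
    ∀ᶠ h in nhdsWithin (0:ℝ) (Ioi 0),
      volume (Icc (x - h) (x + h) \ S) ≤ ENNReal.ofReal (h / 8) := by
  have h1 : ∀ᶠ h in nhdsWithin (0:ℝ) (Ioi 0),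
      ENNReal.ofReal (15/16) < volume (S ∩ closedBall x h) / volume (closedBall x h) :=
    hd.eventually (eventually_gt_nhds (by rw [ENNReal.ofReal_lt_one]; norm_num))
  filter_upwards [h1, self_mem_nhdsWithin] with h hrat (hh : h ∈ Ioi 0)
  have hh0 : (0:ℝ) < h := hh
  have hcb : volume (closedBall x h) = ENNReal.ofReal (2 * h) := by
    rw [Real.volume_closedBall]
  have hne : volume (closedBall x h) ≠ 0 := by
    rw [hcb]; simp only [ne_eq, ENNReal.ofReal_eq_zero, not_le]; linarith
  have hnt : volume (closedBall x h) ≠ ⊤ := by rw [hcb]; exact ENNReal.ofReal_ne_top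
  have hlow : ENNReal.ofReal (15 * h / 8) ≤ volume (S ∩ closedBall x h) := by
    have := le_of_lt ((ENNReal.lt_div_iff_mul_lt (Or.inl hne) (Or.inl hnt)).1 hrat)
    calc ENNReal.ofReal (15 * h / 8) = ENNReal.ofReal (15/16) * volume (closedBall x h) := by
          rw [hcb, ← ENNReal.ofReal_mul (by norm_num)]; ring_nf
      _ ≤ volume (S ∩ closedBall x h) := this
  have hIcc : closedBall x h = Icc (x - h) (x + h) := Real.closedBall_eq_Icc
  rw [← hIcc]
  have hsub2 : S ∩ closedBall x h ⊆ closedBall x h := inter_subset_right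
  have hdiff : closedBall x h \ S = closedBall x h \ (S ∩ closedBall x h) := by
    ext y; simp only [mem_diff, mem_inter_iff]; tauto
  rw [hdiff, measure_diff hsub2 (hS.inter measurableSet_closedBall).nullMeasurableSet
    (ne_top_of_le_ne_top hnt (measure_mono hsub2))]
  calc volume (closedBall x h) - volume (S ∩ closedBall x h)
      ≤ ENNReal.ofReal (2 * h) - ENNReal.ofReal (15 * h / 8) := by
        rw [← hcb]; exact tsub_le_tsub_left hlow _
    _ = ENNReal.ofReal (2 * h - 15 * h / 8) := by
        rw [ENNReal.ofReal_sub _ (by positivity)]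
    _ ≤ ENNReal.ofReal (h / 8) := by
        apply ENNReal.ofReal_le_ofReal; linarith

lemma core_lemma {P Q : Set ℝ} {r r' h₀ : ℝ} (hP : MeasurableSet P) (hQ : MeasurableSet Q)
    (hh₀ : 0 < h₀)
    (hdP : Tendsto (fun h : ℝ => volume (P ∩ closedBall r h) / volume (closedBall r h))
      (nhdsWithin 0 (Ioi 0)) (nhds 1))
    (hdQ : Tendsto (fun h : ℝ => volume (Q ∩ closedBall r' h) / volume (closedBall r' h))
      (nhdsWithin 0 (Ioi 0)) (nhds 1))
    (Ω : Set (ℝ × ℝ))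
    (hsub : ∀ᶠ h in nhdsWithin (0:ℝ) (Ioi 0), ∃ C : Set (ℝ × ℝ), MeasurableSet C ∧ C ⊆ Ω ∧
      C ⊆ Icc (r - h) (r + h) ×ˢ Icc (r' - h) (r' + h) ∧ volume C = ENNReal.ofReal (h^2)) :
    ∃ E : Set (ℝ × ℝ), MeasurableSet E ∧ E ⊆ (P ×ˢ Q) ∩ Ω ∧
      E ⊆ Icc (r - h₀) (r + h₀) ×ˢ Icc (r' - h₀) (r' + h₀) ∧ 0 < volume E := by
  have hsmall : ∀ᶠ h in nhdsWithin (0:ℝ) (Ioi 0), h ≤ h₀ :=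
    eventually_nhdsWithin_of_eventually_nhds
      ((eventually_lt_nhds hh₀).mono fun x hx => le_of_lt hx)
  obtain ⟨h, hdP', hdQ', ⟨C, hCm, hCΩ, hCsq, hCvol⟩, hhle, (hh0 : h ∈ Ioi 0)⟩ :=
    ((dens_lower hP hdP).and ((dens_lower hQ hdQ).and
      (hsub.and (hsmall.and self_mem_nhdsWithin)))).exists
  have hh0' : (0:ℝ) < h := hh0
  refine ⟨C ∩ (P ×ˢ Q), hCm.inter (hP.prod hQ), fun p hp => ⟨hp.2, hCΩ hp.1⟩,
    fun p hp => ?_, ?_⟩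
  · have := hCsq hp.1
    rw [mem_prod] at this ⊢
    constructor
    · exact Icc_subset_Icc (by linarith) (by linarith) this.1
    · exact Icc_subset_Icc (by linarith) (by linarith) this.2
  · -- positivity of measure
    by_contra hzero
    push_neg at hzero
    have hzero' : volume (C ∩ (P ×ˢ Q)) = 0 := le_antisymm hzero zero_le
    -- C is covered by the intersection and two small bad strips
    have hcover : C ⊆ (C ∩ (P ×ˢ Q)) ∪
        ((Icc (r - h) (r + h) \ P) ×ˢ Icc (r' - h) (r' + h)) ∪
        (Icc (r - h) (r + h) ×ˢ (Icc (r' - h) (r' + h) \ Q)) := by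
      intro p hp
      by_cases h1 : p.1 ∈ P
      · by_cases h2 : p.2 ∈ Q
        · exact Or.inl (Or.inl ⟨hp, h1, h2⟩)
        · exact Or.inr ⟨(hCsq hp).1, (hCsq hp).2, h2⟩
      · exact Or.inl (Or.inr ⟨⟨(hCsq hp).1, h1⟩, (hCsq hp).2⟩)
    have hb1 : volume ((Icc (r - h) (r + h) \ P) ×ˢ Icc (r' - h) (r' + h))
        ≤ ENNReal.ofReal (h/8) * ENNReal.ofReal (2*h) := by
      rw [Measure.volume_eq_prod, Measure.prod_prod]
      apply mul_le_mul' hdP'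
      rw [Real.volume_Icc]
      apply ENNReal.ofReal_le_ofReal; linarith
    have hb2 : volume (Icc (r - h) (r + h) ×ˢ (Icc (r' - h) (r' + h) \ Q))
        ≤ ENNReal.ofReal (2*h) * ENNReal.ofReal (h/8) := by
      rw [Measure.volume_eq_prod, Measure.prod_prod]
      apply mul_le_mul' _ hdQ'
      rw [Real.volume_Icc]
      apply ENNReal.ofReal_le_ofReal; linarith
    have : ENNReal.ofReal (h^2) ≤ ENNReal.ofReal (h^2/2) := by
      calc ENNReal.ofReal (h^2) = volume C := hCvol.symm
        _ ≤ (volume (C ∩ (P ×ˢ Q)) +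
            volume ((Icc (r - h) (r + h) \ P) ×ˢ Icc (r' - h) (r' + h))) +
             volume (Icc (r - h) (r + h) ×ˢ (Icc (r' - h) (r' + h) \ Q)) := by
          refine le_trans (measure_mono hcover) ?_
          refine le_trans (measure_union_le _ _) ?_
          exact add_le_add_left (measure_union_le _ _) _
        _ ≤ (0 + ENNReal.ofReal (h/8) * ENNReal.ofReal (2*h)) +
             ENNReal.ofReal (2*h) * ENNReal.ofReal (h/8) := by
          rw [hzero']; exact add_le_add (add_le_add le_rfl hb1) hb2
        _ ≤ ENNReal.ofReal (h^2/2) := by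
          rw [zero_add, ← ENNReal.ofReal_mul (by positivity), ← ENNReal.ofReal_mul (by positivity),
            ← ENNReal.ofReal_add (by positivity) (by positivity)]
          apply ENNReal.ofReal_le_ofReal; ring_nf; nlinarith
    rw [ENNReal.ofReal_le_ofReal_iff (by positivity)] at this
    nlinarith


noncomputable def xf (s : ℝ) (p : ℝ × ℝ) : ℝ := (p.1 * p.1 - p.2 * p.2 + s * s)/(2*s)
noncomputable def yf (s : ℝ) (p : ℝ × ℝ) : ℝ := Real.sqrt (p.1 * p.1 - xf s p * xf s p)
noncomputable def Phim (u1 u2 s : ℝ) (p : ℝ × ℝ) : ℝ × ℝ :=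
  ((xf s p * u1 - yf s p * u2)/s, (xf s p * u2 + yf s p * u1)/s)
def Oms (s : ℝ) : Set (ℝ × ℝ) := {p | 0 < p.1 ∧ 0 < p.2 ∧ |p.1 - p.2| < s ∧ s < p.1 + p.2}

lemma y_sq_pos {s : ℝ} {p : ℝ × ℝ} (hs : 0 < s) (hp : p ∈ Oms s) :
    0 < p.1 * p.1 - xf s p * xf s p := by
  obtain ⟨ha, hb, habs, hsum⟩ := hp
  rw [abs_lt] at habs
  have hA : 0 < p.1 + s + p.2 := by linarith
  have hB : 0 < p.1 + s - p.2 := by linarith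
  have hC : 0 < p.2 + p.1 - s := by linarith
  have hD : 0 < p.2 - p.1 + s := by linarith
  have hid : p.1 * p.1 - xf s p * xf s p =
      (p.1 + s + p.2) * (p.1 + s - p.2) * ((p.2 + p.1 - s) * (p.2 - p.1 + s)) / (4*s^2) := by
    rw [xf]; field_simp; ring
  rw [hid]; positivity

lemma yf_pos {s : ℝ} {p : ℝ × ℝ} (hs : 0 < s) (hp : p ∈ Oms s) : 0 < yf s p :=
  Real.sqrt_pos.2 (y_sq_pos hs hp)

lemma yf_sq {s : ℝ} {p : ℝ × ℝ} (hs : 0 < s) (hp : p ∈ Oms s) :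
    yf s p * yf s p = p.1 * p.1 - xf s p * xf s p :=
  Real.mul_self_sqrt (y_sq_pos hs hp).le

lemma yf_le {s : ℝ} {p : ℝ × ℝ} (hs : 0 < s) (hp : p ∈ Oms s) : yf s p ≤ p.1 := by
  rw [yf]
  calc Real.sqrt (p.1 * p.1 - xf s p * xf s p) ≤ Real.sqrt (p.1 * p.1) :=
        Real.sqrt_le_sqrt (by nlinarith [mul_self_nonneg (xf s p)])
    _ = p.1 := Real.sqrt_mul_self hp.1.le

lemma phim_norm1 {u1 u2 s : ℝ} {p : ℝ × ℝ} (hs : 0 < s) (hu : u1^2 + u2^2 = s^2)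
    (hp : p ∈ Oms s) :
    (Phim u1 u2 s p).1^2 + (Phim u1 u2 s p).2^2 = p.1^2 := by
  have h2 := yf_sq hs hp
  rw [Phim]
  field_simp
  nlinarith [h2, hu, sq_nonneg (xf s p), sq_nonneg (yf s p)]

lemma phim_norm2 {u1 u2 s : ℝ} {p : ℝ × ℝ} (hs : 0 < s) (hu : u1^2 + u2^2 = s^2)
    (hp : p ∈ Oms s) :
    ((Phim u1 u2 s p).1 - u1)^2 + ((Phim u1 u2 s p).2 - u2)^2 = p.2^2 := by
  have h2 := yf_sq hs hp
  have hx : 2 * s * xf s p = p.1 * p.1 - p.2 * p.2 + s * s := by rw [xf]; field_simp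
  rw [Phim]
  field_simp
  nlinarith [h2, hu, hx]

noncomputable def fderm (u1 u2 s : ℝ) (p : ℝ × ℝ) : (ℝ × ℝ) →L[ℝ] (ℝ × ℝ) :=
  LinearMap.toContinuousLinearMap (Matrix.toLin (Module.Basis.finTwoProd ℝ) (Module.Basis.finTwoProd ℝ)
    !![(p.1/s * u1 - p.1*(s - xf s p)/(s * yf s p) * u2)/s,
       (-p.2/s * u1 - xf s p * p.2/(s * yf s p) * u2)/s;
       (p.1/s * u2 + p.1*(s - xf s p)/(s * yf s p) * u1)/s,
       (-p.2/s * u2 + xf s p * p.2/(s * yf s p) * u1)/s])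

lemma fderm_det (u1 u2 s : ℝ) (p : ℝ × ℝ) :
    (fderm u1 u2 s p).det =
      (p.1/s * u1 - p.1*(s - xf s p)/(s * yf s p) * u2)/s *
        ((-p.2/s * u2 + xf s p * p.2/(s * yf s p) * u1)/s) -
      (-p.2/s * u1 - xf s p * p.2/(s * yf s p) * u2)/s *
        ((p.1/s * u2 + p.1*(s - xf s p)/(s * yf s p) * u1)/s) := by
  simp only [fderm, ContinuousLinearMap.det, LinearMap.det_toContinuousLinearMap,
    LinearMap.det_toLin, Matrix.det_fin_two_of]

lemma fderm_det_val {u1 u2 s : ℝ} {p : ℝ × ℝ} (hs : 0 < s) (hu : u1^2 + u2^2 = s^2)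
    (hp : p ∈ Oms s) :
    (fderm u1 u2 s p).det = p.1 * p.2 / (s * yf s p) := by
  rw [fderm_det]
  have hy := yf_pos hs hp
  field_simp
  linear_combination (p.1 * p.2 * yf s p * s) * hu

lemma hasfd_phim {u1 u2 s : ℝ} {p : ℝ × ℝ} (hs : 0 < s) (hp : p ∈ Oms s) :
    HasFDerivAt (Phim u1 u2 s) (fderm u1 u2 s p) p := by
  have hy2 : 0 < p.1 * p.1 - xf s p * xf s p := y_sq_pos hs hp
  have hyne : p.1 * p.1 - xf s p * xf s p ≠ 0 := ne_of_gt hy2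
  have hXf : HasFDerivAt (xf s) _ p :=
    ((((hasFDerivAt_fst (𝕜 := ℝ) (p := p)).mul (hasFDerivAt_fst (𝕜 := ℝ) (p := p))).sub
      ((hasFDerivAt_snd (𝕜 := ℝ) (p := p)).mul (hasFDerivAt_snd (𝕜 := ℝ) (p := p)))).add_const
        (s * s)).mul_const (2*s)⁻¹
  have hW : HasFDerivAt (fun q : ℝ × ℝ => q.1 * q.1 - xf s q * xf s q) _ p :=
    ((hasFDerivAt_fst (𝕜 := ℝ) (p := p)).mul (hasFDerivAt_fst (𝕜 := ℝ) (p := p))).sub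
      (hXf.mul hXf)
  have hYf : HasFDerivAt (yf s) _ p :=
    (Real.hasDerivAt_sqrt hyne).comp_hasFDerivAt p hW
  have hphi : HasFDerivAt (Phim u1 u2 s) _ p :=
    (((hXf.mul_const u1).sub (hYf.mul_const u2)).mul_const s⁻¹).prodMk
      (((hXf.mul_const u2).add (hYf.mul_const u1)).mul_const s⁻¹)
  refine hphi.congr_fderiv ?_
  apply ContinuousLinearMap.ext
  intro v
  have hyy : Real.sqrt (p.1 * p.1 - xf s p * xf s p) = yf s p := rfl
  have hypos : 0 < yf s p := yf_pos hs hp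
  have hsq := yf_sq hs hp
  apply Prod.ext <;>
  · simp only [fderm, LinearMap.coe_toContinuousLinearMap', Matrix.toLin_finTwoProd_apply,
      ContinuousLinearMap.prod_apply, ContinuousLinearMap.smul_apply,
      ContinuousLinearMap.add_apply, ContinuousLinearMap.sub_apply,
      ContinuousLinearMap.coe_fst', ContinuousLinearMap.coe_snd',
      ContinuousLinearMap.smulRight_apply, ContinuousLinearMap.one_apply, smul_eq_mul, hyy]
    field_simp
    ring

lemma phim_nrm1 {u1 u2 s : ℝ} {p : ℝ × ℝ} (hs : 0 < s) (hu : u1^2 + u2^2 = s^2)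
    (hp : p ∈ Oms s) :
    Real.sqrt ((Phim u1 u2 s p).1^2 + (Phim u1 u2 s p).2^2) = p.1 := by
  rw [phim_norm1 hs hu hp, Real.sqrt_sq hp.1.le]

lemma phim_nrm2 {u1 u2 s : ℝ} {p : ℝ × ℝ} (hs : 0 < s) (hu : u1^2 + u2^2 = s^2)
    (hp : p ∈ Oms s) :
    Real.sqrt (((Phim u1 u2 s p).1 - u1)^2 + ((Phim u1 u2 s p).2 - u2)^2) = p.2 := by
  rw [phim_norm2 hs hu hp, Real.sqrt_sq hp.2.1.le]

lemma image_pos {u1 u2 s β : ℝ} {E : Set (ℝ × ℝ)} (hs : 0 < s) (hu : u1^2 + u2^2 = s^2)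
    (hβ : 0 < β) (hE : MeasurableSet E) (hEΩ : E ⊆ Oms s) (hEβ : ∀ p ∈ E, β ≤ p.2) :
    ENNReal.ofReal (β/s) * volume E ≤ volume (Phim u1 u2 s '' E) := by
  have hinj : Set.InjOn (Phim u1 u2 s) E := by
    intro p hp q hq heq
    have h1 : p.1 = q.1 := by
      have := phim_nrm1 hs hu (hEΩ hp)
      rw [heq, phim_nrm1 hs hu (hEΩ hq)] at this
      exact this.symm
    have h2 : p.2 = q.2 := by
      have := phim_nrm2 hs hu (hEΩ hp)
      rw [heq, phim_nrm2 hs hu (hEΩ hq)] at this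
      exact this.symm
    exact Prod.ext h1 h2
  have hf' : ∀ p ∈ E, HasFDerivWithinAt (Phim u1 u2 s) (fderm u1 u2 s p) E p :=
    fun p hp => (hasfd_phim hs (hEΩ hp)).hasFDerivWithinAt
  refine le_trans ?_ (lintegral_abs_det_fderiv_le_addHaar_image volume hE hf' hinj)
  have hmeas : Measurable fun p : ℝ × ℝ => ENNReal.ofReal |(fderm u1 u2 s p).det| := by
    have hfun : (fun p : ℝ × ℝ => (fderm u1 u2 s p).det) = fun p : ℝ × ℝ =>
        (p.1/s * u1 - p.1*(s - xf s p)/(s * yf s p) * u2)/s *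
          ((-p.2/s * u2 + xf s p * p.2/(s * yf s p) * u1)/s) -
        (-p.2/s * u1 - xf s p * p.2/(s * yf s p) * u2)/s *
          ((p.1/s * u2 + p.1*(s - xf s p)/(s * yf s p) * u1)/s) :=
      funext fun p => fderm_det u1 u2 s p
    have hxm : Measurable (xf s) := by unfold xf; fun_prop
    have hym : Measurable (yf s) := by
      unfold yf
      exact Real.continuous_sqrt.measurable.comp
        ((measurable_fst.mul measurable_fst).sub (hxm.mul hxm))
    apply ENNReal.measurable_ofReal.comp
    apply Measurable.abs
    rw [hfun]
    fun_prop
  calc ENNReal.ofReal (β/s) * volume E = ∫⁻ _ in E, ENNReal.ofReal (β/s) ∂volume := by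
        rw [setLIntegral_const]
    _ ≤ ∫⁻ p in E, ENNReal.ofReal |(fderm u1 u2 s p).det| ∂volume := by
        refine setLIntegral_mono hmeas fun p hp => ?_
        obtain ⟨hp1, hp2, _, _⟩ := hEΩ hp
        have hy := yf_pos hs (hEΩ hp)
        have hyle := yf_le hs (hEΩ hp)
        rw [fderm_det_val hs hu (hEΩ hp), abs_of_pos (by positivity)]
        apply ENNReal.ofReal_le_ofReal
        rw [div_le_div_iff₀ hs (by positivity)]
        have hb2 := hEβ p hp
        have key : β * yf s p ≤ p.2 * p.1 := mul_le_mul hb2 hyle hy.le hp2.le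
        nlinarith [key, hs]


/-- `ℓ`-privacy of circular noise functions. The measure with circular
density `v ↦ R ‖v‖` satisfies `ℓ`-privacy on `X` iff there is a set `N'` of
one-dimensional Lebesgue measure zero such that
`R r ≤ exp (ℓ_X (r, r')) * R r'` for all `r, r' ∈ [0, ∞) \ N'` with `(r, r') ∈ D_X`. -/
theorem l_privacy_circular_noise_iff
    (X : Set (EuclideanSpace ℝ (Fin 2)))
    (ℓ : ℝ → ℝ) (hℓ_nonneg : ∀ d : ℝ, 0 ≤ d → 0 ≤ ℓ d)
    (R : ℝ → ℝ) (hR_meas : Measurable R) (hR_nonneg : ∀ r, 0 ≤ r → 0 ≤ R r)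
    (hR_density : ∫⁻ v : EuclideanSpace ℝ (Fin 2),
        ENNReal.ofReal (R ‖v‖) ∂volume = 1) :
    (∀ V : Set (EuclideanSpace ℝ (Fin 2)), MeasurableSet V →
      ∀ u ∈ {u : EuclideanSpace ℝ (Fin 2) | ∃ i ∈ X, ∃ j ∈ X, u = j - i},
        (volume.withDensity (fun v : EuclideanSpace ℝ (Fin 2) => ENNReal.ofReal (R ‖v‖))) V
          ≤ ENNReal.ofReal (Real.exp (ℓ ‖u‖)) *
            (volume.withDensity (fun v : EuclideanSpace ℝ (Fin 2) => ENNReal.ofReal (R ‖v‖)))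
              ((fun v => v + u) '' V))
      ↔
    (∃ N' : Set ℝ, N' ⊆ Set.Ici (0 : ℝ) ∧ volume N' = 0 ∧
      ∀ r ∈ Set.Ici (0 : ℝ) \ N', ∀ r' ∈ Set.Ici (0 : ℝ) \ N',
        (r, r') ∈ {p : ℝ × ℝ | ∃ v v' : EuclideanSpace ℝ (Fin 2),
            p.1 = ‖v‖ ∧ p.2 = ‖v'‖ ∧
            v' - v ∈ {u : EuclideanSpace ℝ (Fin 2) | ∃ i ∈ X, ∃ j ∈ X, u = j - i}} →
          R r ≤ Real.exp (sInf {z : ℝ | ∃ v v' : EuclideanSpace ℝ (Fin 2),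
              ‖v‖ = r ∧ ‖v'‖ = r' ∧
              v - v' ∈ {u : EuclideanSpace ℝ (Fin 2) | ∃ i ∈ X, ∃ j ∈ X, u = j - i} ∧
              z = ℓ ‖v - v'‖}) * R r') := by
  classical
  set VX : Set (EuclideanSpace ℝ (Fin 2)) :=
    {u : EuclideanSpace ℝ (Fin 2) | ∃ i ∈ X, ∃ j ∈ X, u = j - i} with hVXdef
  set f : EuclideanSpace ℝ (Fin 2) → ℝ≥0∞ := fun v => ENNReal.ofReal (R ‖v‖) with hfdef
  have hfm : Measurable f :=
    ENNReal.measurable_ofReal.comp (hR_meas.comp measurable_norm)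
  have hVXneg : ∀ u ∈ VX, -u ∈ VX := by
    rintro u ⟨i, hi, j, hj, rfl⟩
    exact ⟨j, hj, i, hi, by abel⟩
  have hSlb : ∀ r r' : ℝ, ∀ z ∈ {z : ℝ | ∃ v v' : EuclideanSpace ℝ (Fin 2),
      ‖v‖ = r ∧ ‖v'‖ = r' ∧ v - v' ∈ VX ∧ z = ℓ ‖v - v'‖}, (0:ℝ) ≤ z := by
    rintro r r' z ⟨v, v', _, _, _, rfl⟩
    exact hℓ_nonneg _ (norm_nonneg _)
  constructor
  · -- FORWARD DIRECTION
    intro hpriv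
    set N' : Set ℝ := insert 0 (Set.Ici 0 ∩ ⋃ q : ℚ,
      (badDens {t : ℝ | (q:ℝ) < R t} ∪ badDens {t : ℝ | R t < (q:ℝ)})) with hN'def
    have hPm : ∀ q : ℚ, MeasurableSet {t : ℝ | (q:ℝ) < R t} :=
      fun q => hR_meas measurableSet_Ioi
    have hQm : ∀ q : ℚ, MeasurableSet {t : ℝ | R t < (q:ℝ)} :=
      fun q => hR_meas measurableSet_Iio
    have hN'null : volume N' = 0 := by
      rw [hN'def, insert_eq]
      refine measure_union_null Real.volume_singleton ?_
      refine measure_mono_null inter_subset_right (measure_iUnion_null fun q => ?_)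
      exact measure_union_null (badDens_null (hPm q)) (badDens_null (hQm q))
    refine ⟨N', ?_, hN'null, ?_⟩
    · intro x hx
      rcases hx with rfl | hx
      · exact Set.self_mem_Ici
      · exact hx.1
    intro r hr r' hr' hD
    obtain ⟨v₀, v₀', hv₀, hv₀', hm₀⟩ := hD
    have hz₀ : ℓ ‖v₀ - v₀'‖ ∈ {z : ℝ | ∃ v v' : EuclideanSpace ℝ (Fin 2),
        ‖v‖ = r ∧ ‖v'‖ = r' ∧ v - v' ∈ VX ∧ z = ℓ ‖v - v'‖} := by
      refine ⟨v₀, v₀', hv₀.symm, hv₀'.symm, ?_, rfl⟩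
      have := hVXneg _ hm₀
      simpa using this
    -- key: the inequality holds for every element of the inf set
    have key : ∀ z ∈ {z : ℝ | ∃ v v' : EuclideanSpace ℝ (Fin 2),
        ‖v‖ = r ∧ ‖v'‖ = r' ∧ v - v' ∈ VX ∧ z = ℓ ‖v - v'‖}, R r ≤ Real.exp z * R r' := by
      rintro z ⟨v, v', hv, hv', hmem, rfl⟩
      have hRr'0 : 0 ≤ R r' := hR_nonneg r' hr'.1
      have hRr0 : 0 ≤ R r := hR_nonneg r hr.1
      by_cases hs0 : ‖v - v'‖ = 0
      · -- u = 0 : r = r'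
        have hvv : v = v' := by rwa [norm_sub_eq_zero_iff] at hs0
        have hrr : r = r' := by rw [← hv, ← hv', hvv]
        have h1 : (1:ℝ) ≤ Real.exp (ℓ ‖v - v'‖) := by
          rw [← Real.exp_zero]
          exact Real.exp_le_exp.2 (hℓ_nonneg _ (norm_nonneg _))
        calc R r = 1 * R r' := by rw [one_mul, hrr]
          _ ≤ Real.exp (ℓ ‖v - v'‖) * R r' := by
              exact mul_le_mul_of_nonneg_right h1 hRr'0
      · have hs : 0 < ‖v - v'‖ := lt_of_le_of_ne (norm_nonneg _) (Ne.symm hs0)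
        set s : ℝ := ‖v - v'‖ with hsdef
        have hrne : r ≠ 0 := by
          intro h; exact hr.2 (by rw [hN'def, h]; exact mem_insert _ _)
        have hr'ne : r' ≠ 0 := by
          intro h; exact hr'.2 (by rw [hN'def, h]; exact mem_insert _ _)
        have hrpos : 0 < r := lt_of_le_of_ne hr.1 (Ne.symm hrne)
        have hr'pos : 0 < r' := lt_of_le_of_ne hr'.1 (Ne.symm hr'ne)
        by_contra hcon
        push_neg at hcon
        have hexp : (0:ℝ) < Real.exp (ℓ s) := Real.exp_pos _
        have hRrpos : 0 < R r := lt_of_le_of_lt (by positivity) hcon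
        obtain ⟨q2, hq2a, hq2b⟩ := exists_rat_btwn
          (show R r' < R r / Real.exp (ℓ s) by rw [lt_div_iff₀ hexp]; nlinarith)
        obtain ⟨q1, hq1a, hq1b⟩ := exists_rat_btwn
          (show Real.exp (ℓ s) * (q2:ℝ) < R r by
            rw [← lt_div_iff₀' hexp]; exact hq2b)
        set P := {t : ℝ | (q1:ℝ) < R t} with hPdef
        set Q := {t : ℝ | R t < (q2:ℝ)} with hQdef
        have hrP : r ∈ P := hq1b
        have hr'Q : r' ∈ Q := hq2a
        have hnotin : ∀ x : ℝ, x ∈ Set.Ici (0:ℝ) \ N' →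
            x ∉ ⋃ q : ℚ, (badDens {t : ℝ | (q:ℝ) < R t} ∪ badDens {t : ℝ | R t < (q:ℝ)}) := by
          intro x hx hmem'
          exact hx.2 (by rw [hN'def]; exact mem_insert_of_mem _ ⟨hx.1, hmem'⟩)
        have hdP : Tendsto (fun h : ℝ => volume (P ∩ closedBall r h) / volume (closedBall r h))
            (nhdsWithin 0 (Ioi 0)) (nhds 1) := by
          by_contra hT
          exact hnotin r hr (mem_iUnion.2 ⟨q1, Or.inl ⟨hrP, hT⟩⟩)
        have hdQ : Tendsto (fun h : ℝ => volume (Q ∩ closedBall r' h) / volume (closedBall r' h))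
            (nhdsWithin 0 (Ioi 0)) (nhds 1) := by
          by_contra hT
          exact hnotin r' hr' (mem_iUnion.2 ⟨q2, Or.inr ⟨hr'Q, hT⟩⟩)
        have habs : |r - r'| ≤ s := by
          rw [← hv, ← hv']; exact abs_norm_sub_norm_le v v'
        have hsum : s ≤ r + r' := by
          rw [← hv, ← hv']; exact norm_sub_le v v'
        -- eventual quarter-square construction
        have hsub : ∀ᶠ h in nhdsWithin (0:ℝ) (Ioi 0), ∃ C : Set (ℝ × ℝ), MeasurableSet C ∧
            C ⊆ Oms s ∧ C ⊆ Icc (r - h) (r + h) ×ˢ Icc (r' - h) (r' + h) ∧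
            volume C = ENNReal.ofReal (h^2) := by
          have hvol : ∀ a b h : ℝ, 0 < h →
              volume (Ioo a (a+h) ×ˢ Ioo b (b+h)) = ENNReal.ofReal (h^2) := by
            intro a b h hh
            rw [Measure.volume_eq_prod, Measure.prod_prod, Real.volume_Ioo, Real.volume_Ioo,
              show a + h - a = h by ring, show b + h - b = h by ring,
              ← ENNReal.ofReal_mul hh.le, sq]
          have hev : ∀ δ : ℝ, 0 < δ → ∀ᶠ h in nhdsWithin (0:ℝ) (Ioi 0), h < δ := fun δ hδ =>
            eventually_nhdsWithin_of_eventually_nhds (eventually_lt_nhds hδ)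
          rcases eq_or_lt_of_le habs with habs' | habs'
          · rcases (abs_eq hs.le).1 habs' with hcase | hcase
            · -- r - r' = s : lower-left/upper quarter
              filter_upwards [hev r hrpos, hev s hs, hev (2*r') (by linarith),
                self_mem_nhdsWithin] with h ha hb hc (hh : h ∈ Ioi 0)
              refine ⟨Ioo (r-h) (r-h+h) ×ˢ Ioo r' (r'+h),
                (measurableSet_Ioo.prod measurableSet_Ioo), ?_, ?_, hvol (r-h) r' h hh⟩
              · rintro ⟨a, b⟩ ⟨hA, hB⟩
                simp only [mem_Ioo] at hA hB
                refine ⟨by simp; linarith, by simp; linarith, ?_, by simp; linarith⟩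
                rw [abs_lt]; constructor <;> simp <;> linarith
              · rintro ⟨a, b⟩ ⟨hA, hB⟩
                simp only [mem_Ioo] at hA hB
                exact ⟨⟨by linarith, by linarith⟩, ⟨by linarith, by linarith⟩⟩
            · -- r' - r = s
              filter_upwards [hev r' hr'pos, hev s hs, hev (2*r) (by linarith),
                self_mem_nhdsWithin] with h ha hb hc (hh : h ∈ Ioi 0)
              refine ⟨Ioo r (r+h) ×ˢ Ioo (r'-h) (r'-h+h),
                (measurableSet_Ioo.prod measurableSet_Ioo), ?_, ?_, hvol r (r'-h) h hh⟩
              · rintro ⟨a, b⟩ ⟨hA, hB⟩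
                simp only [mem_Ioo] at hA hB
                refine ⟨by simp; linarith, by simp; linarith, ?_, by simp; linarith⟩
                rw [abs_lt]; constructor <;> simp <;> linarith
              · rintro ⟨a, b⟩ ⟨hA, hB⟩
                simp only [mem_Ioo] at hA hB
                exact ⟨⟨by linarith, by linarith⟩, ⟨by linarith, by linarith⟩⟩
          · -- strict case
            filter_upwards [hev (s - (r - r')) (by cases abs_lt.1 habs'; linarith),
              hev (s - (r' - r)) (by cases abs_lt.1 habs'; linarith),
              self_mem_nhdsWithin] with h h1 h2 (hh : h ∈ Ioi 0)
            refine ⟨Ioo r (r+h) ×ˢ Ioo r' (r'+h), (measurableSet_Ioo.prod measurableSet_Ioo),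
              ?_, ?_, hvol r r' h hh⟩
            · rintro ⟨a, b⟩ ⟨ha, hb⟩
              simp only [mem_Ioo] at ha hb
              refine ⟨by simp; linarith, by simp; linarith, ?_, by simp; linarith⟩
              rw [abs_lt]; constructor <;> simp <;> linarith
            · rintro ⟨a, b⟩ ⟨ha, hb⟩
              simp only [mem_Ioo] at ha hb
              exact ⟨⟨by linarith, by linarith⟩, ⟨by linarith, by linarith⟩⟩
        obtain ⟨E, hEm, hEsub, hEwin, hEpos⟩ := core_lemma (hPm q1) (hQm q2)
          (half_pos hr'pos) hdP hdQ (Oms s) hsub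
        -- transfer to Euclidean plane
        set u : EuclideanSpace ℝ (Fin 2) := v - v' with hudef
        set pu : ℝ × ℝ := e2map.symm u with hpudef
        have hpu : e2map pu = u := e2map.apply_symm_apply u
        have hpu_norm : pu.1^2 + pu.2^2 = s^2 := by
          have h1 : Real.sqrt (pu.1^2 + pu.2^2) = s := by
            rw [← e2map_norm, hpu]
          have h2 : 0 ≤ pu.1^2 + pu.2^2 := by positivity
          rw [← h1, Real.sq_sqrt h2]
        -- privacy at -u gives a null bad set
        have hmu : -u ∈ VX := hVXneg u hmem
        have hae := (privacy_iff_ae hfm (-u) (ENNReal.ofReal (Real.exp (ℓ ‖-u‖)))).1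
          (fun V hV => hpriv V hV (-u) hmu)
        have hTnull : volume {w : EuclideanSpace ℝ (Fin 2) |
            ¬ (f w ≤ ENNReal.ofReal (Real.exp (ℓ ‖-u‖)) * f (w + -u))} = 0 := by
          exact ae_iff.1 hae
        have hT'null : volume (e2map ⁻¹' {w : EuclideanSpace ℝ (Fin 2) |
            ¬ (f w ≤ ENNReal.ofReal (Real.exp (ℓ ‖-u‖)) * f (w + -u))}) = 0 := by
          rw [e2map_mp.measure_preimage ?hm]
          · exact hTnull
          case hm =>
            have : MeasurableSet {w : EuclideanSpace ℝ (Fin 2) |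
                f w ≤ ENNReal.ofReal (Real.exp (ℓ ‖-u‖)) * f (w + -u)} :=
              measurableSet_le hfm ((hfm.comp (measurable_add_const (-u))).const_mul _)
            exact this.compl.nullMeasurableSet
        -- the image of E lands in the bad set
        have himg : Phim pu.1 pu.2 s '' E ⊆ e2map ⁻¹' {w : EuclideanSpace ℝ (Fin 2) |
            ¬ (f w ≤ ENNReal.ofReal (Real.exp (ℓ ‖-u‖)) * f (w + -u))} := by
          rintro w ⟨p, hpE, rfl⟩
          have hpΩ : p ∈ Oms s := (hEsub hpE).2
          have hpPQ : p ∈ P ×ˢ Q := (hEsub hpE).1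
          have hn1 : ‖e2map (Phim pu.1 pu.2 s p)‖ = p.1 := by
            rw [e2map_norm]
            exact phim_nrm1 hs hpu_norm hpΩ
          have hn2 : ‖e2map (Phim pu.1 pu.2 s p) + -u‖ = p.2 := by
            have : e2map (Phim pu.1 pu.2 s p) + -u = e2map (Phim pu.1 pu.2 s p - pu) := by
              rw [← e2map_sub _ pu, hpu]; abel
            rw [this, e2map_norm]
            have : (Phim pu.1 pu.2 s p - pu).1 = (Phim pu.1 pu.2 s p).1 - pu.1 := rfl
            rw [this]
            have : (Phim pu.1 pu.2 s p - pu).2 = (Phim pu.1 pu.2 s p).2 - pu.2 := rfl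
            rw [this]
            exact phim_nrm2 hs hpu_norm hpΩ
          simp only [Set.mem_preimage, Set.mem_setOf_eq, hfdef, hn1, hn2, not_le]
          have hq1R : (q1:ℝ) < R p.1 := hpPQ.1
          have hq2R : R p.2 < (q2:ℝ) := hpPQ.2
          have hchain : Real.exp (ℓ ‖-u‖) * R p.2 < R p.1 := by
            rw [norm_neg]
            show Real.exp (ℓ s) * R p.2 < R p.1
            calc Real.exp (ℓ s) * R p.2 ≤ Real.exp (ℓ s) * (q2:ℝ) :=
                mul_le_mul_of_nonneg_left hq2R.le hexp.le
              _ < (q1:ℝ) := hq1a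
              _ < R p.1 := hq1R
          have hRp2 : 0 ≤ R p.2 := hR_nonneg p.2 hpΩ.2.1.le
          have hq2pos : (0:ℝ) < (q2:ℝ) := lt_of_le_of_lt hRr'0 hq2a
          have hq1pos : (0:ℝ) < (q1:ℝ) := lt_trans (by positivity) hq1a
          have hRp1 : 0 < R p.1 := lt_trans hq1pos hq1R
          calc ENNReal.ofReal (Real.exp (ℓ ‖-u‖)) * ENNReal.ofReal (R p.2)
              = ENNReal.ofReal (Real.exp (ℓ ‖-u‖) * R p.2) := by
                rw [← ENNReal.ofReal_mul (Real.exp_pos _).le]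
            _ < ENNReal.ofReal (R p.1) := by
                rw [ENNReal.ofReal_lt_ofReal_iff hRp1]; exact hchain
        -- contradiction
        have hEβ : ∀ p ∈ E, r'/2 ≤ p.2 := by
          intro p hp
          have := (hEwin hp).2
          simp only [mem_Icc] at this
          linarith [this.1]
        have hle := image_pos hs hpu_norm (half_pos hr'pos) hEm
          (fun p hp => (hEsub hp).2) hEβ
        have hpos : (0:ℝ≥0∞) < ENNReal.ofReal (r'/2/s) * volume E :=
          ENNReal.mul_pos (by simp [ENNReal.ofReal_eq_zero]; positivity) (ne_of_gt hEpos)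
        have : (0:ℝ≥0∞) < 0 := lt_of_lt_of_le hpos
          (le_trans hle (le_trans (measure_mono himg) (le_of_eq hT'null)))
        exact lt_irrefl _ this
    -- conclude via csInf
    have hRr'0 : 0 ≤ R r' := hR_nonneg r' hr'.1
    by_cases hRr : R r ≤ 0
    · exact le_trans hRr (by positivity)
    push_neg at hRr
    by_cases hRr' : R r' = 0
    · exfalso
      have hk := key _ hz₀
      rw [hRr', mul_zero] at hk
      linarith
    have hRr'pos : 0 < R r' := lt_of_le_of_ne hRr'0 (Ne.symm hRr')
    have hlog : Real.log (R r / R r') ≤ sInf {z : ℝ | ∃ v v' : EuclideanSpace ℝ (Fin 2),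
        ‖v‖ = r ∧ ‖v'‖ = r' ∧ v - v' ∈ VX ∧ z = ℓ ‖v - v'‖} := by
      apply le_csInf ⟨_, hz₀⟩
      intro z hz
      rw [Real.log_le_iff_le_exp (by positivity)]
      rw [div_le_iff₀ hRr'pos]
      exact key z hz
    have := Real.exp_le_exp.2 hlog
    rw [Real.exp_log (by positivity)] at this
    rw [div_le_iff₀ hRr'pos] at this
    exact this
  · -- BACKWARD DIRECTION
    rintro ⟨N', hN'sub, hN'null, hcond⟩ V hV u humem
    set N'' := toMeasurable volume N' with hN''def
    have hN''m : MeasurableSet N'' := measurableSet_toMeasurable _ _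
    have hN''null : volume N'' = 0 := by rw [hN''def, measure_toMeasurable]; exact hN'null
    have hrad : volume {w : EuclideanSpace ℝ (Fin 2) | ‖w‖ ∈ N''} = 0 :=
      radial_null hN''m hN''null
    have hrad2 : volume ((fun w : EuclideanSpace ℝ (Fin 2) => w + u) ⁻¹'
        {w : EuclideanSpace ℝ (Fin 2) | ‖w‖ ∈ N''}) = 0 := by
      have hset : NullMeasurableSet {w : EuclideanSpace ℝ (Fin 2) | ‖w‖ ∈ N''} volume :=
        (show MeasurableSet {w : EuclideanSpace ℝ (Fin 2) | ‖w‖ ∈ N''} from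
          measurable_norm hN''m).nullMeasurableSet
      exact ((measurePreserving_add_right volume u).measure_preimage hset).trans hrad
    refine (privacy_iff_ae hfm u (ENNReal.ofReal (Real.exp (ℓ ‖u‖)))).2 ?_ V hV
    rw [ae_iff]
    refine measure_mono_null ?_ (measure_union_null hrad hrad2)
    intro w hw
    simp only [Set.mem_setOf_eq] at hw
    by_contra hwnot
    simp only [Set.mem_union, Set.mem_preimage, Set.mem_setOf_eq] at hwnot
    push_neg at hwnot
    apply hw
    -- now ‖w‖ ∉ N'', ‖w+u‖ ∉ N''
    have h1 : ‖w‖ ∈ Set.Ici (0:ℝ) \ N' :=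
      ⟨norm_nonneg w, fun hmem => hwnot.1 (subset_toMeasurable _ _ hmem)⟩
    have h2 : ‖w + u‖ ∈ Set.Ici (0:ℝ) \ N' :=
      ⟨norm_nonneg _, fun hmem => hwnot.2 (subset_toMeasurable _ _ hmem)⟩
    have hD : (‖w‖, ‖w + u‖) ∈ {p : ℝ × ℝ | ∃ v v' : EuclideanSpace ℝ (Fin 2),
        p.1 = ‖v‖ ∧ p.2 = ‖v'‖ ∧ v' - v ∈ VX} := by
      exact ⟨w, w + u, rfl, rfl, by simpa using humem⟩
    have hkey := hcond _ h1 _ h2 hD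
    have hinf_le : sInf {z : ℝ | ∃ v v' : EuclideanSpace ℝ (Fin 2),
        ‖v‖ = ‖w‖ ∧ ‖v'‖ = ‖w + u‖ ∧ v - v' ∈ VX ∧ z = ℓ ‖v - v'‖} ≤ ℓ ‖u‖ := by
      have hmm : ℓ ‖u‖ ∈ {z : ℝ | ∃ v v' : EuclideanSpace ℝ (Fin 2),
          ‖v‖ = ‖w‖ ∧ ‖v'‖ = ‖w + u‖ ∧ v - v' ∈ VX ∧ z = ℓ ‖v - v'‖} := by
        refine ⟨w, w + u, rfl, rfl, ?_, ?_⟩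
        · have : w - (w + u) = -u := by abel
          rw [this]; exact hVXneg u humem
        · have : w - (w + u) = -u := by abel
          rw [this, norm_neg]
      exact csInf_le ⟨0, fun z hz => hSlb _ _ z hz⟩ hmm
    have hstep : R ‖w‖ ≤ Real.exp (ℓ ‖u‖) * R ‖w + u‖ := by
      refine le_trans hkey (mul_le_mul_of_nonneg_right ?_ (hR_nonneg _ (norm_nonneg _)))
      exact Real.exp_le_exp.2 hinf_le
    simp only [hfdef]
    calc ENNReal.ofReal (R ‖w‖) ≤ ENNReal.ofReal (Real.exp (ℓ ‖u‖) * R ‖w + u‖) :=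
          ENNReal.ofReal_le_ofReal hstep
      _ = ENNReal.ofReal (Real.exp (ℓ ‖u‖)) * ENNReal.ofReal (R ‖w + u‖) :=
          ENNReal.ofReal_mul (Real.exp_pos _).le
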